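/- Let ρ ≥ 0 with 0 < E[ρ] < ∞. Then there exists t₀ ∈ (0,1) such that ∫_{t₀}^1 Q_ρ(1-s) ds > (1/2) E[ρ]; consequently, for any nonnegative random variable X with E[ρX] ≤ x, one has Q_X(t₀) ≤ 2x / E[ρ]. -/

import Mathlib

open MeasureTheory Set Filter
open scoped ENNReal

noncomputable def quantile {Ω : Type*} [MeasurableSpace Ω] (P : MeasureTheory.Measure Ω) (Y : Ω → ℝ) (t : ℝ) : ℝ :=
  sInf {z : ℝ | P {ω | Y ω ≤ z} > ENNReal.ofReal t}

section aux

variable {Ω : Type*} [MeasurableSpace Ω] {P : MeasureTheory.Measure Ω}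
  [MeasureTheory.IsProbabilityMeasure P]

lemma qset_mem_nonneg {Y : Ω → ℝ} (hY : ∀ ω, 0 ≤ Y ω) {t z : ℝ}
    (hz : P {ω | Y ω ≤ z} > ENNReal.ofReal t) : 0 ≤ z := by
  have h0 : P {ω | Y ω ≤ z} ≠ 0 := by
    intro h
    rw [h] at hz
    exact (not_lt.2 zero_le) hz
  obtain ⟨ω, hω⟩ := nonempty_of_measure_ne_zero h0
  exact (hY ω).trans hω

lemma quantile_nonneg {Y : Ω → ℝ} (hY : ∀ ω, 0 ≤ Y ω) (t : ℝ) :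
    0 ≤ quantile P Y t := by
  unfold quantile
  exact Real.sInf_nonneg fun z hz => qset_mem_nonneg hY hz

lemma qset_bddBelow {Y : Ω → ℝ} (hY : ∀ ω, 0 ≤ Y ω) (t : ℝ) :
    BddBelow {z : ℝ | P {ω | Y ω ≤ z} > ENNReal.ofReal t} :=
  ⟨0, fun _ hz => qset_mem_nonneg hY hz⟩

lemma qset_nonempty {Y : Ω → ℝ} {t : ℝ} (ht : t < 1) :
    {z : ℝ | P {ω | Y ω ≤ z} > ENNReal.ofReal t}.Nonempty := by
  have hd : Monotone fun n : ℕ => {ω | Y ω ≤ (n : ℝ)} := by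
    intro m n hmn ω hω
    simp only [mem_setOf_eq] at hω ⊢
    exact le_trans hω (Nat.cast_le.2 hmn)
  have hu : (⋃ n : ℕ, {ω | Y ω ≤ (n : ℝ)}) = univ := by
    ext ω
    simp only [mem_iUnion, mem_setOf_eq, mem_univ, iff_true]
    exact exists_nat_ge (Y ω)
  have h1 : (⨆ n : ℕ, P {ω | Y ω ≤ (n : ℝ)}) = 1 := by
    rw [← hd.directed_le.measure_iUnion, hu, measure_univ]
  have hlt : ENNReal.ofReal t < ⨆ n : ℕ, P {ω | Y ω ≤ (n : ℝ)} := by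
    rw [h1]
    exact ENNReal.ofReal_lt_one.2 ht
  obtain ⟨n, hn⟩ := lt_iSup_iff.1 hlt
  exact ⟨n, hn⟩

lemma quantile_mono {Y : Ω → ℝ} (hYnn : ∀ ω, 0 ≤ Y ω) {u v : ℝ}
    (huv : u ≤ v) (hv : v < 1) : quantile P Y u ≤ quantile P Y v := by
  unfold quantile
  refine csInf_le_csInf (qset_bddBelow hYnn u) (qset_nonempty hv) ?_
  intro z hz
  exact lt_of_le_of_lt (ENNReal.ofReal_le_ofReal huv) hz

/-- If `F(t) < u` then the `u`-quantile exceeds `t`. -/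
lemma quantile_gt {ρ : Ω → ℝ} (hρ : Measurable ρ) {t u : ℝ}
    (ht : 0 ≤ t) (hu1 : u < 1) (hu : (P {ω | ρ ω ≤ t}).toReal < u) :
    t < quantile P ρ u := by
  by_contra hcon
  push_neg at hcon
  have hne := qset_nonempty (P := P) (Y := ρ) hu1
  have key : ∀ t' : ℝ, t < t' → ENNReal.ofReal u ≤ P {ω | ρ ω ≤ t'} := by
    intro t' ht'
    obtain ⟨z, hz, hzt⟩ := exists_lt_of_csInf_lt hne (lt_of_le_of_lt hcon ht')
    exact le_of_lt (lt_of_lt_of_le hz (measure_mono fun ω hω => le_trans hω hzt.le))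
  have hrc : ENNReal.ofReal u ≤ P {ω | ρ ω ≤ t} := by
    set s : ℕ → Set Ω := fun n => {ω | ρ ω ≤ t + 1 / (n + 1)} with hs
    have hsm : ∀ n, MeasurableSet (s n) := fun n => measurableSet_le hρ measurable_const
    have hanti : Antitone s := by
      intro m n hmn ω hω
      have h1 : (1 : ℝ) / (n + 1) ≤ 1 / (m + 1) := by
        apply one_div_le_one_div_of_le
        · positivity
        · have := (Nat.cast_le (α := ℝ)).2 hmn; linarith
      simp only [hs, mem_setOf_eq] at hω ⊢
      linarith
    have hint : (⋂ n, s n) = {ω | ρ ω ≤ t} := by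
      ext ω
      simp only [mem_iInter, mem_setOf_eq, hs]
      constructor
      · intro hall
        refine le_of_forall_pos_le_add fun ε hε => ?_
        obtain ⟨n, hn⟩ := exists_nat_one_div_lt hε
        exact (hall n).trans (by linarith)
      · intro h n
        have hp : (0:ℝ) < 1 / (n + 1) := by positivity
        linarith
    have htend := tendsto_measure_iInter_atTop
      (fun n => (hsm n).nullMeasurableSet) hanti ⟨0, measure_ne_top P _⟩
    rw [hint] at htend
    refine ge_of_tendsto htend (Eventually.of_forall fun n => key _ ?_)
    have hp : (0:ℝ) < 1 / (n + 1) := by positivity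
    linarith
  have hfin : u ≤ (P {ω | ρ ω ≤ t}).toReal := by
    have h0u : 0 ≤ u := le_trans ENNReal.toReal_nonneg hu.le
    calc u = (ENNReal.ofReal u).toReal := (ENNReal.toReal_ofReal h0u).symm
    _ ≤ _ := ENNReal.toReal_mono (measure_ne_top P _) hrc
  linarith

end aux

theorem stmt_12 {Ω : Type*} [MeasurableSpace Ω] (P : MeasureTheory.Measure Ω)
    [MeasureTheory.IsProbabilityMeasure P] (ρ : Ω → ℝ)
    (hρ : Measurable ρ) (hρnn : ∀ ω, 0 ≤ ρ ω)
    (hint : MeasureTheory.Integrable ρ P) (hpos : 0 < ∫ ω, ρ ω ∂P)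
    (x : ℝ) (hx : 0 ≤ x) :
    ∃ t₀ ∈ Set.Ioo (0:ℝ) 1,
      ENNReal.ofReal ((1/2) * ∫ ω, ρ ω ∂P)
          < ∫⁻ s in Set.Ioo t₀ 1, ENNReal.ofReal (quantile P ρ (1 - s)) ∧
      ∀ X : Ω → ℝ, Measurable X → (∀ ω, 0 ≤ X ω) →
        (∫⁻ ω, ENNReal.ofReal (ρ ω * X ω) ∂P) ≤ ENNReal.ofReal x →
        quantile P X t₀ ≤ 2 * x / ∫ ω, ρ ω ∂P := by
  set E := ∫ ω, ρ ω ∂P with hE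
  set G : ℝ → ℝ≥0∞ := fun t => P {ω | t < ρ ω} with hG
  have hGanti : Antitone G := fun t₁ t₂ h =>
    measure_mono fun ω hω => lt_of_le_of_lt h hω
  have hGm : Measurable G := hGanti.measurable
  have hEeq : ∫⁻ t in Ioi (0:ℝ), G t = ENNReal.ofReal E := by
    rw [← lintegral_eq_lintegral_meas_lt P (ae_of_all _ hρnn) hρ.aemeasurable,
      ← ofReal_integral_eq_lintegral_ofReal hint (ae_of_all _ hρnn)]
  set I : ℝ → ℝ≥0∞ := fun b => ∫⁻ t in Ioi (0:ℝ), (G t - ENNReal.ofReal b) with hI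
  have hImono : ∀ a b : ℝ, a ≤ b → I b ≤ I a := fun a b hab =>
    lintegral_mono fun t => tsub_le_tsub le_rfl (ENNReal.ofReal_le_ofReal hab)
  -- ⨆ n, I (1/(n+1)) = ofReal E
  have hinv_anti : ∀ n m : ℕ, n ≤ m → (1 : ℝ) / (m + 1) ≤ 1 / (n + 1) := by
    intro n m hnm
    apply one_div_le_one_div_of_le
    · positivity
    · have := (Nat.cast_le (α := ℝ)).2 hnm; linarith
  have hsup : (⨆ n : ℕ, I (1 / (n + 1))) = ENNReal.ofReal E := by
    have hmeas : ∀ n : ℕ, AEMeasurable (fun t => G t - ENNReal.ofReal (1 / ((n:ℝ) + 1)))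
        (volume.restrict (Ioi (0:ℝ))) := fun n => (hGm.sub measurable_const).aemeasurable
    have hmono : ∀ᵐ t ∂(volume.restrict (Ioi (0:ℝ))),
        Monotone fun n : ℕ => G t - ENNReal.ofReal (1 / ((n:ℝ) + 1)) :=
      ae_of_all _ fun t n m hnm =>
        tsub_le_tsub le_rfl (ENNReal.ofReal_le_ofReal (hinv_anti n m hnm))
    have hpt : ∀ t : ℝ, (⨆ n : ℕ, (G t - ENNReal.ofReal (1 / ((n:ℝ) + 1)))) = G t := by
      intro t
      rw [← ENNReal.sub_iInf]
      have h0 : (⨅ n : ℕ, ENNReal.ofReal (1 / ((n:ℝ) + 1))) = 0 := by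
        refine le_antisymm ?_ zero_le
        have htt : Tendsto (fun n : ℕ => ENNReal.ofReal (1 / ((n:ℝ) + 1))) atTop (nhds 0) := by
          rw [← ENNReal.ofReal_zero]
          exact ENNReal.tendsto_ofReal tendsto_one_div_add_atTop_nhds_zero_nat
        exact ge_of_tendsto htt (Eventually.of_forall fun n => iInf_le _ n)
      rw [h0, tsub_zero]
    calc (⨆ n : ℕ, I (1 / (n + 1)))
        = ∫⁻ t in Ioi (0:ℝ), ⨆ n : ℕ, (G t - ENNReal.ofReal (1 / ((n:ℝ) + 1))) :=
          (lintegral_iSup' hmeas hmono).symm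
      _ = ∫⁻ t in Ioi (0:ℝ), G t := lintegral_congr fun t => hpt t
      _ = ENNReal.ofReal E := hEeq
  have hhalf : ENNReal.ofReal ((1/2) * E) < ⨆ n : ℕ, I (1 / (n + 1)) := by
    rw [hsup]
    exact (ENNReal.ofReal_lt_ofReal_iff hpos).2 (by linarith)
  obtain ⟨n₀, hn₀⟩ := lt_iSup_iff.1 hhalf
  -- positivity of P {0 < ρ}
  have hppos : 0 < P {ω | 0 < ρ ω} := by
    by_contra h
    push_neg at h
    have h0 : P {ω | 0 < ρ ω} = 0 := le_antisymm h zero_le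
    have hae : ρ =ᵐ[P] 0 := by
      have : ∀ᵐ ω ∂P, ¬ (0 < ρ ω) := by
        rw [ae_iff]
        simpa using h0
      filter_upwards [this] with ω hω
      have := hρnn ω
      simp only [Pi.zero_apply]
      linarith [not_lt.1 hω]
    have : E = 0 := by
      rw [hE, integral_congr_ae hae]
      simp
    linarith
  have hptR : 0 < (P {ω | 0 < ρ ω}).toReal :=
    ENNReal.toReal_pos hppos.ne' (measure_ne_top P _)
  obtain ⟨n₁, hn₁⟩ := exists_nat_one_div_lt hptR
  set N : ℕ := max n₀ (max n₁ 1) with hN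
  set t₀ : ℝ := 1 / (N + 1) with ht₀
  have hNn₀ : n₀ ≤ N := le_max_left _ _
  have hNn₁ : n₁ ≤ N := le_trans (le_max_left _ _) (le_max_right _ _)
  have hN1 : 1 ≤ N := le_trans (le_max_right _ _) (le_max_right _ _)
  have ht₀pos : 0 < t₀ := by positivity
  have ht₀lt1 : t₀ < 1 := by
    rw [ht₀]
    have h2 : (2:ℝ) ≤ N + 1 := by
      have h1N : (1:ℝ) ≤ (N:ℝ) := by exact_mod_cast hN1
      linarith
    rw [div_lt_one (by linarith)]
    linarith
  have ht₀p : t₀ < (P {ω | 0 < ρ ω}).toReal :=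
    lt_of_le_of_lt (hinv_anti n₁ N hNn₁) hn₁
  have hIt₀ : ENNReal.ofReal ((1/2) * E) < I t₀ :=
    lt_of_lt_of_le hn₀ (hImono _ _ (hinv_anti n₀ N hNn₀))
  -- key lower bound on integrals over sets of probability ≥ 1 - t₀
  have hcompl : ∀ t : ℝ, {ω | t < ρ ω} = {ω | ρ ω ≤ t}ᶜ := by
    intro t; ext ω; simp [not_le]
  refine ⟨t₀, ⟨ht₀pos, ht₀lt1⟩, ?_, ?_⟩
  · -- first conjunct
    have hfanti : AntitoneOn (fun s => quantile P ρ (1 - s)) (Ioo t₀ 1) := by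
      intro s₁ hs₁ s₂ hs₂ h12
      exact quantile_mono hρnn (by linarith) (by linarith [hs₁.1])
    have hfmble : AEMeasurable (fun s => quantile P ρ (1 - s))
        (volume.restrict (Ioo t₀ 1)) :=
      aemeasurable_restrict_of_antitoneOn measurableSet_Ioo hfanti
    rw [lintegral_eq_lintegral_meas_lt (volume.restrict (Ioo t₀ 1))
      (ae_of_all _ fun s => quantile_nonneg hρnn _) hfmble]
    refine lt_of_lt_of_le hIt₀ ?_
    refine setLIntegral_mono' measurableSet_Ioi fun t ht => ?_
    have htpos : 0 < t := ht
    set F : ℝ := (P {ω | ρ ω ≤ t}).toReal with hF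
    have hFnn : 0 ≤ F := ENNReal.toReal_nonneg
    have hsub : Ioo t₀ (1 - F) ⊆ {s | t < quantile P ρ (1 - s)} := by
      intro s hs
      have h1 : F < 1 - s := by linarith [hs.2]
      have h2 : 1 - s < 1 := by linarith [lt_trans ht₀pos hs.1]
      exact quantile_gt hρ htpos.le h2 h1
    have hsub2 : Ioo t₀ (1 - F) ⊆ Ioo t₀ 1 := fun s hs => ⟨hs.1, by linarith [hs.2]⟩
    have hlow : ENNReal.ofReal (1 - F - t₀)
        ≤ (volume.restrict (Ioo t₀ 1)) {s | t < quantile P ρ (1 - s)} := by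
      have : (volume.restrict (Ioo t₀ 1)) (Ioo t₀ (1 - F))
          ≤ (volume.restrict (Ioo t₀ 1)) {s | t < quantile P ρ (1 - s)} :=
        measure_mono hsub
      rw [Measure.restrict_apply' measurableSet_Ioo, inter_eq_left.2 hsub2,
        Real.volume_Ioo] at this
      exact this
    refine le_trans ?_ hlow
    have hF1 : ENNReal.ofReal (1 - F) = G t := by
      have hGt : G t = 1 - P {ω | ρ ω ≤ t} := by
        show P {ω | t < ρ ω} = _
        rw [hcompl t,
          measure_compl (measurableSet_le hρ measurable_const) (measure_ne_top P _),
          measure_univ]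
      rw [hGt, ENNReal.ofReal_sub _ hFnn, ENNReal.ofReal_one, hF,
        ENNReal.ofReal_toReal (measure_ne_top P _)]
    rw [ENNReal.ofReal_sub _ ht₀pos.le, hF1]
  · -- second conjunct
    intro X hX hXnn hXb
    rcases eq_or_lt_of_le hx with hx0 | hxpos
    · -- x = 0
      have hzero : ∫⁻ ω, ENNReal.ofReal (ρ ω * X ω) ∂P = 0 := by
        refine le_antisymm ?_ zero_le
        simpa [← hx0] using hXb
      have hae : ∀ᵐ ω ∂P, ENNReal.ofReal (ρ ω * X ω) = 0 := by
        have := (lintegral_eq_zero_iff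
          ((hρ.mul hX).ennreal_ofReal)).1 hzero
        filter_upwards [this] with ω hω
        exact hω
      have hsub : {ω | 0 < ρ ω} ≤ᵐ[P] {ω | X ω ≤ 0} := by
        filter_upwards [hae] with ω hω hρω
        simp only [ENNReal.ofReal_eq_zero] at hω
        have hρω' : 0 < ρ ω := hρω
        show X ω ≤ 0
        nlinarith [hXnn ω]
      have hle : P {ω | 0 < ρ ω} ≤ P {ω | X ω ≤ 0} := measure_mono_ae hsub
      have h0mem : ENNReal.ofReal t₀ < P {ω | X ω ≤ 0} := by
        refine lt_of_lt_of_le ?_ hle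
        rw [← ENNReal.ofReal_toReal (measure_ne_top P {ω | 0 < ρ ω})]
        exact (ENNReal.ofReal_lt_ofReal_iff_of_nonneg ht₀pos.le).2 ht₀p
      have hqle : quantile P X t₀ ≤ 0 := csInf_le (qset_bddBelow hXnn t₀) h0mem
      rw [← hx0]
      simpa using hqle
    · -- x > 0
      set c : ℝ := 2 * x / E with hc
      have hcpos : 0 < c := by positivity
      by_contra hq
      push_neg at hq
      have hnotmem : P {ω | X ω ≤ c} ≤ ENNReal.ofReal t₀ := by
        by_contra hmem
        push_neg at hmem
        exact absurd (csInf_le (qset_bddBelow hXnn t₀) hmem) (not_le.2 hq)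
      set A : Set Ω := {ω | X ω ≤ c}ᶜ with hA
      have hAm : MeasurableSet A := (measurableSet_le hX measurable_const).compl
      have hbound : ∀ t : ℝ, G t - ENNReal.ofReal t₀ ≤ (P.restrict A) {ω | t < ρ ω} := by
        intro t
        rw [Measure.restrict_apply (measurableSet_lt measurable_const hρ)]
        refine tsub_le_iff_right.2 ?_
        calc G t ≤ P ({ω | t < ρ ω} ∩ A ∪ Aᶜ) := by
              refine measure_mono ?_
              intro ω hω
              by_cases hAc : ω ∈ A
              · exact Or.inl ⟨hω, hAc⟩
              · exact Or.inr hAc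
          _ ≤ P ({ω | t < ρ ω} ∩ A) + P Aᶜ := measure_union_le _ _
          _ ≤ P ({ω | t < ρ ω} ∩ A) + ENNReal.ofReal t₀ := by
              gcongr
              simpa [hA, compl_compl] using hnotmem
      have hAlow : I t₀ ≤ ∫⁻ ω in A, ENNReal.ofReal (ρ ω) ∂P := by
        rw [lintegral_eq_lintegral_meas_lt (P.restrict A)
          (ae_of_all _ hρnn) hρ.aemeasurable]
        exact lintegral_mono fun t => hbound t
      have hmul : ENNReal.ofReal c * ∫⁻ ω in A, ENNReal.ofReal (ρ ω) ∂P
          ≤ ∫⁻ ω, ENNReal.ofReal (ρ ω * X ω) ∂P := by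
        rw [← lintegral_const_mul _ (hρ.ennreal_ofReal)]
        refine le_trans ?_ (setLIntegral_le_lintegral A _)
        refine setLIntegral_mono_ae' hAm (ae_of_all _ fun ω hω => ?_)
        have hcX : c < X ω := by
          simpa [hA, not_le] using hω
        rw [← ENNReal.ofReal_mul hcpos.le]
        exact ENNReal.ofReal_le_ofReal (by nlinarith [hρnn ω])
      have hchain : ENNReal.ofReal x < ENNReal.ofReal x := by
        calc ENNReal.ofReal x
            = ENNReal.ofReal c * ENNReal.ofReal ((1/2) * E) := by
              rw [← ENNReal.ofReal_mul hcpos.le]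
              congr 1
              have hE0 : E ≠ 0 := ne_of_gt hpos
              rw [hc]
              field_simp
          _ < ENNReal.ofReal c * I t₀ := by
              refine ENNReal.mul_lt_mul_right ?_ ?_ hIt₀
              · simpa using hcpos
              · exact ENNReal.ofReal_ne_top
          _ ≤ ENNReal.ofReal c * ∫⁻ ω in A, ENNReal.ofReal (ρ ω) ∂P := by gcongr
          _ ≤ ∫⁻ ω, ENNReal.ofReal (ρ ω * X ω) ∂P := hmul
          _ ≤ ENNReal.ofReal x := hXb
      exact absurd hchain (lt_irrefl _)
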